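/- Let N ≥ 1 and let H ∈ Mat_{2N}(ℂ) be Hermitian with Kᵀ·H̄·K = −H. Then there exist a unitary W ∈ Mat_{2N}(ℂ) satisfying Kᵀ·W̄·K = W and a diagonal matrix D ∈ Mat_N(ℝ) such that W·H·W* = [[D, 0], [0, −D]]. -/

import Mathlib

noncomputable section
open Matrix

local notation "⟪" x ", " y "⟫" => @inner ℂ _ _ x y

section Abstract

variable {E : Type} [NormedAddCommGroup E] [InnerProductSpace ℂ E]

/-- In a nonzero space with an antilinear involution, there is a fixed unit vector. -/
lemma exists_fixed_unit (θ : E → E)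
    (hadd : ∀ x y, θ (x + y) = θ x + θ y)
    (hsmul : ∀ (c : ℂ) (x : E), θ (c • x) = (starRingEnd ℂ) c • θ x)
    (hinv : ∀ x, θ (θ x) = x)
    (hE : ∃ x : E, x ≠ 0) :
    ∃ e : E, θ e = e ∧ ‖e‖ = 1 := by
  obtain ⟨x, hx⟩ := hE
  have key : ∃ y : E, y ≠ 0 ∧ θ y = y := by
    by_cases h : x + θ x = 0
    · have hθx : θ x = -x := eq_neg_of_add_eq_zero_right h
      refine ⟨Complex.I • x, smul_ne_zero Complex.I_ne_zero hx, ?_⟩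
      rw [hsmul, hθx]
      simp [Complex.conj_I]
    · exact ⟨x + θ x, h, by rw [hadd, hinv, add_comm]⟩
  obtain ⟨y, hy0, hyθ⟩ := key
  refine ⟨((‖y‖⁻¹ : ℝ) : ℂ) • y, ?_, ?_⟩
  · rw [hsmul, hyθ, Complex.conj_ofReal]
  · rw [norm_smul, Complex.norm_real, norm_inv, norm_norm,
      inv_mul_cancel₀ (norm_ne_zero_iff.mpr hy0)]


/-- An eigenpair `v, θ v` with orthogonality, in a space of dimension ≥ 2. -/
lemma exists_eigenpair [FiniteDimensional ℂ E]
    (θ : E → E)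
    (hadd : ∀ x y, θ (x + y) = θ x + θ y)
    (hsmul : ∀ (c : ℂ) (x : E), θ (c • x) = (starRingEnd ℂ) c • θ x)
    (hinv : ∀ x, θ (θ x) = x)
    (hinner : ∀ x y, ⟪θ x, θ y⟫ = ⟪y, x⟫)
    (T : E →ₗ[ℂ] E) (hT : T.IsSymmetric)
    (hanti : ∀ x, θ (T x) = -T (θ x))
    (hr : 2 ≤ Module.finrank ℂ E) :
    ∃ (v : E) (lam : ℝ), ‖v‖ = 1 ∧ ⟪v, θ v⟫ = 0 ∧ T v = (lam : ℂ) • v := by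
  have hnn : Module.finrank ℂ E = Module.finrank ℂ E := rfl
  by_cases hex : ∃ i, hT.eigenvalues hnn i ≠ 0
  · obtain ⟨i, hi⟩ := hex
    set lam := hT.eigenvalues hnn i with hlam
    set v := hT.eigenvectorBasis hnn i with hv
    have hv1 : ‖v‖ = 1 := (hT.eigenvectorBasis hnn).orthonormal.1 i
    have hTv : T v = (lam : ℂ) • v := hT.apply_eigenvectorBasis hnn i
    have hTθv : T (θ v) = -((lam : ℂ) • θ v) := by
      have h1 := hanti v
      rw [hTv, hsmul, Complex.conj_ofReal] at h1
      exact neg_eq_iff_eq_neg.mp h1.symm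
    have horth : ⟪v, θ v⟫ = 0 := by
      have h2 := hT v (θ v)
      rw [hTv, hTθv, inner_smul_left, inner_neg_right, inner_smul_right,
        Complex.conj_ofReal] at h2
      have h3 : (lam : ℂ) * ⟪v, θ v⟫ = 0 := by
        have h4 : (2 : ℂ) * ((lam : ℂ) * ⟪v, θ v⟫) = 0 := by linear_combination h2
        exact (mul_eq_zero.mp h4).resolve_left (by norm_num)
      rcases mul_eq_zero.mp h3 with h | h
      · exact absurd (by exact_mod_cast h) hi
      · exact h
    exact ⟨v, lam, hv1, horth, hTv⟩
  · push_neg at hex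
    have hT0 : ∀ x, T x = 0 := by
      have hTeq : T = 0 := by
        apply (hT.eigenvectorBasis hnn).toBasis.ext
        intro i
        rw [OrthonormalBasis.coe_toBasis, hT.apply_eigenvectorBasis hnn i, hex i]
        simp
      intro x; rw [hTeq]; rfl
    have hnontriv : ∃ x : E, x ≠ 0 := by
      have h0 : 0 < Module.finrank ℂ E := by omega
      have := Module.finrank_pos_iff (R := ℂ) (M := E) |>.mp h0
      exact exists_ne 0
    obtain ⟨e, hee, he1⟩ := exists_fixed_unit θ hadd hsmul hinv hnontriv
    have he0 : e ≠ 0 := by intro h; rw [h] at he1; simp at he1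
    set F := (ℂ ∙ e)ᗮ with hF
    have hθF : ∀ x ∈ F, θ x ∈ F := by
      intro x hx
      rw [Submodule.mem_orthogonal]
      intro u hu
      obtain ⟨c, rfl⟩ := Submodule.mem_span_singleton.mp hu
      rw [inner_smul_left]
      have h5 : ⟪e, x⟫ = 0 :=
        Submodule.inner_right_of_mem_orthogonal (Submodule.mem_span_singleton_self e) hx
      have h6 : ⟪θ e, θ x⟫ = ⟪x, e⟫ := hinner e x
      rw [hee] at h6
      rw [h6, ← inner_conj_symm, h5, map_zero, mul_zero]
    have hrF : 0 < Module.finrank ℂ F := by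
      have h1 : Module.finrank ℂ (ℂ ∙ e) + Module.finrank ℂ F = Module.finrank ℂ E :=
        Submodule.finrank_add_finrank_orthogonal (ℂ ∙ e)
      rw [finrank_span_singleton he0] at h1
      omega
    have hFnontriv : ∃ x : F, x ≠ 0 := by
      have := Module.finrank_pos_iff (R := ℂ) (M := F) |>.mp hrF
      exact exists_ne 0
    set θ' : F → F := fun x => ⟨θ x, hθF x x.2⟩ with hθ'
    obtain ⟨f', hf'θ, hf'1⟩ := exists_fixed_unit θ'
      (fun x y => by apply Subtype.ext; simp [hθ', hadd])
      (fun c x => by apply Subtype.ext; simp [hθ', hsmul])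
      (fun x => by apply Subtype.ext; simp [hθ', hinv]) hFnontriv
    set f : E := (f' : E) with hf
    have hff : θ f = f := congrArg Subtype.val hf'θ
    have hf1 : ‖f‖ = 1 := hf'1
    have hef : ⟪e, f⟫ = 0 :=
      Submodule.inner_right_of_mem_orthogonal (Submodule.mem_span_singleton_self e) f'.2
    have hfe : ⟪f, e⟫ = 0 := by
      rw [← inner_conj_symm, hef]; simp
    have heei : ⟪e, e⟫ = 1 := by
      rw [inner_self_eq_norm_sq_to_K, he1]; norm_num
    have hffi : ⟪f, f⟫ = 1 := by
      rw [inner_self_eq_norm_sq_to_K, hf1]; norm_num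
    set u : E := e + Complex.I • f with hu
    have hθu : θ u = e - Complex.I • f := by
      rw [hu, hadd, hsmul, hee, hff, Complex.conj_I, neg_smul, sub_eq_add_neg]
    have huu : ⟪u, u⟫ = 2 := by
      rw [hu]
      simp only [inner_add_left, inner_add_right, inner_smul_left, inner_smul_right,
        heei, hffi, hef, hfe, Complex.conj_I]
      ring_nf
      rw [Complex.I_sq]
      ring
    have huθu : ⟪u, θ u⟫ = 0 := by
      rw [hθu, hu, sub_eq_add_neg]
      simp only [inner_add_left, inner_add_right, inner_neg_right, inner_smul_left,
        inner_smul_right, heei, hffi, hef, hfe, Complex.conj_I]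
      ring_nf
      rw [Complex.I_sq]
      ring
    have hu0 : u ≠ 0 := by
      intro h
      rw [h, inner_zero_left] at huu
      norm_num at huu
    refine ⟨((‖u‖⁻¹ : ℝ) : ℂ) • u, 0, ?_, ?_, ?_⟩
    · rw [norm_smul, Complex.norm_real, norm_inv, norm_norm,
        inv_mul_cancel₀ (norm_ne_zero_iff.mpr hu0)]
    · rw [hsmul, Complex.conj_ofReal, inner_smul_left, inner_smul_right, huθu]
      ring
    · rw [hT0]; simp


/-- Main abstract lemma: an orthonormal family adapted to θ diagonalizing T. -/
lemma exists_adapted_family :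
    ∀ (N : ℕ) (E : Type) [NormedAddCommGroup E] [InnerProductSpace ℂ E]
      [FiniteDimensional ℂ E]
      (θ : E → E),
      (∀ x y, θ (x + y) = θ x + θ y) →
      (∀ (c : ℂ) (x : E), θ (c • x) = (starRingEnd ℂ) c • θ x) →
      (∀ x, θ (θ x) = x) →
      (∀ x y, ⟪θ x, θ y⟫ = ⟪y, x⟫) →
      ∀ (T : E →ₗ[ℂ] E), T.IsSymmetric →
      (∀ x, θ (T x) = -T (θ x)) →
      2 * N ≤ Module.finrank ℂ E →
    ∃ (v : Fin N ⊕ Fin N → E) (d : Fin N → ℝ),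
      Orthonormal ℂ v ∧
      (∀ j, θ (v (Sum.inl j)) = v (Sum.inr j)) ∧
      (∀ j, T (v (Sum.inl j)) = ((d j : ℂ)) • v (Sum.inl j)) ∧
      (∀ j, T (v (Sum.inr j)) = (-(d j : ℂ)) • v (Sum.inr j)) := by
  intro N
  induction N with
  | zero =>
    intro E _ _ _ θ hadd hsmul hinv hinner T hT hanti hr
    refine ⟨fun _ => 0, fun j => j.elim0, ⟨fun i => i.elim isEmptyElim isEmptyElim,
      fun i => i.elim isEmptyElim isEmptyElim⟩,
      fun j => j.elim0, fun j => j.elim0, fun j => j.elim0⟩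
  | succ N ih =>
    intro E _ _ _ θ hadd hsmul hinv hinner T hT hanti hr
    classical
    obtain ⟨v0, lam, hv01, hv0orth, hTv0⟩ :=
      exists_eigenpair θ hadd hsmul hinv hinner T hT hanti (by omega)
    set w0 := θ v0 with hw0def
    have hθw0 : θ w0 = v0 := hinv v0
    have hw01 : ‖w0‖ = 1 := by
      have h1 : ⟪w0, w0⟫ = ⟪v0, v0⟫ := hinner v0 v0
      rw [inner_self_eq_norm_sq_to_K, inner_self_eq_norm_sq_to_K, hv01] at h1
      have h3 : (‖w0‖ : ℝ) ^ 2 = 1 ^ 2 := by exact_mod_cast h1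
      nlinarith [norm_nonneg w0]
    have hTw0 : T w0 = (-(lam : ℂ)) • w0 := by
      have h1 := hanti v0
      rw [hTv0, hsmul, Complex.conj_ofReal] at h1
      rw [← hw0def] at h1
      have := neg_eq_iff_eq_neg.mp h1.symm
      rw [this, neg_smul]
    set S := Submodule.span ℂ ({v0, w0} : Set E) with hS
    set F := Sᗮ with hF
    have hmemv0 : v0 ∈ S := Submodule.subset_span (by simp)
    have hmemw0 : w0 ∈ S := Submodule.subset_span (by simp)
    have hFv0 : ∀ x ∈ F, ⟪v0, x⟫ = 0 :=
      fun x hx => (Submodule.mem_orthogonal S x).1 hx v0 hmemv0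
    have hFw0 : ∀ x ∈ F, ⟪w0, x⟫ = 0 :=
      fun x hx => (Submodule.mem_orthogonal S x).1 hx w0 hmemw0
    have hmemF : ∀ x : E, ⟪v0, x⟫ = 0 → ⟪w0, x⟫ = 0 → x ∈ F := by
      intro x h1 h2
      rw [hF, Submodule.mem_orthogonal]
      intro u hu
      induction hu using Submodule.span_induction with
      | mem u hu =>
        rcases hu with h | h
        · subst h; exact h1
        · simp at h; subst h; exact h2
      | zero => exact inner_zero_left x
      | add a b _ _ ha hb => rw [inner_add_left, ha, hb, add_zero]
      | smul c a _ ha => rw [inner_smul_left, ha, mul_zero]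
    have hθF : ∀ x ∈ F, θ x ∈ F := by
      intro x hx
      apply hmemF
      · have h6 : ⟪θ w0, θ x⟫ = ⟪x, w0⟫ := hinner w0 x
        rw [hθw0] at h6
        rw [h6, ← inner_conj_symm, hFw0 x hx, map_zero]
      · have h6 : ⟪θ v0, θ x⟫ = ⟪x, v0⟫ := hinner v0 x
        rw [h6, ← inner_conj_symm, hFv0 x hx, map_zero]
    have hTF : ∀ x ∈ F, T x ∈ F := by
      intro x hx
      apply hmemF
      · rw [← hT v0 x, hTv0, inner_smul_left, hFv0 x hx, mul_zero]
      · rw [← hT w0 x, hTw0, inner_smul_left, hFw0 x hx, mul_zero]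
    have hrankS : Module.finrank ℂ S ≤ 2 := by
      have h1 : Module.finrank ℂ S ≤ ({v0, w0} : Set E).toFinset.card :=
        finrank_span_le_card ({v0, w0} : Set E)
      have h2 : ({v0, w0} : Set E).toFinset.card ≤ 2 := by
        rw [Set.toFinset_insert, Set.toFinset_singleton]
        exact (Finset.card_insert_le _ _).trans (by simp)
      omega
    have hrankF : 2 * N ≤ Module.finrank ℂ F := by
      have h1 : Module.finrank ℂ S + Module.finrank ℂ F = Module.finrank ℂ E :=
        Submodule.finrank_add_finrank_orthogonal S
      omega
    set θ' : F → F := fun x => ⟨θ x, hθF x x.2⟩ with hθ'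
    set T' : F →ₗ[ℂ] F := T.restrict hTF with hT'def
    obtain ⟨v', d', horth', hθv', hTl', hTr'⟩ := ih F θ'
      (fun x y => by apply Subtype.ext; simp [hθ', hadd])
      (fun c x => by apply Subtype.ext; simp [hθ', hsmul])
      (fun x => by apply Subtype.ext; simp [hθ', hinv])
      (fun x y => by
        rw [Submodule.coe_inner, Submodule.coe_inner]
        exact hinner x y)
      T' (hT.restrict_invariant hTF)
      (fun x => by
        apply Subtype.ext
        have h2 : ((-T' (θ' x) : F) : E) = -(T (θ (x : E))) := rfl
        rw [h2]
        exact hanti x)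
      hrankF
    have hO' := orthonormal_iff_ite.mp horth'
    have hcoe : ∀ a c : F, ⟪(a : E), (c : E)⟫ = ⟪a, c⟫ :=
      fun a c => (Submodule.coe_inner F a c).symm
    have hvv : ⟪v0, v0⟫ = 1 := by rw [inner_self_eq_norm_sq_to_K, hv01]; norm_num
    have hww : ⟪w0, w0⟫ = 1 := by rw [inner_self_eq_norm_sq_to_K, hw01]; norm_num
    have hwv : ⟪w0, v0⟫ = 0 := by rw [← inner_conj_symm, hv0orth, map_zero]
    have hv0x : ∀ x : F, ⟪v0, (x : E)⟫ = 0 := fun x => hFv0 x x.2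
    have hw0x : ∀ x : F, ⟪w0, (x : E)⟫ = 0 := fun x => hFw0 x x.2
    have hxv0 : ∀ x : F, ⟪(x : E), v0⟫ = 0 := fun x => by
      rw [← inner_conj_symm, hv0x, map_zero]
    have hxw0 : ∀ x : F, ⟪(x : E), w0⟫ = 0 := fun x => by
      rw [← inner_conj_symm, hw0x, map_zero]
    refine ⟨Sum.elim (Fin.cons v0 fun j => (v' (Sum.inl j) : E))
      (Fin.cons w0 fun j => (v' (Sum.inr j) : E)), Fin.cons lam d', ?_, ?_, ?_, ?_⟩
    · rw [orthonormal_iff_ite]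
      rintro (i | i) (j | j) <;>
        refine Fin.cases ?_ (fun i2 => ?_) i <;>
        refine Fin.cases ?_ (fun j2 => ?_) j <;>
        simp only [Sum.elim_inl, Sum.elim_inr, Fin.cons_zero, Fin.cons_succ] <;>
        first
          | (rw [hcoe, hO']; simp [Fin.succ_inj])
          | simp [hvv, hww, hwv, hv0orth, hv0x, hw0x, hxv0, hxw0, hv01, hw01,
              Fin.succ_ne_zero, (Fin.succ_ne_zero _).symm]
    · intro j
      refine Fin.cases ?_ (fun j2 => ?_) j
      · simp only [Sum.elim_inl, Sum.elim_inr, Fin.cons_zero]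
        exact hw0def.symm
      · simp only [Sum.elim_inl, Sum.elim_inr, Fin.cons_succ]
        exact congrArg Subtype.val (hθv' j2)
    · intro j
      refine Fin.cases ?_ (fun j2 => ?_) j
      · simp only [Sum.elim_inl, Fin.cons_zero]
        exact hTv0
      · simp only [Sum.elim_inl, Fin.cons_succ]
        have h1 : ((T' (v' (Sum.inl j2)) : F) : E) = T ((v' (Sum.inl j2) : E)) := rfl
        rw [← h1, hTl' j2, Submodule.coe_smul]
    · intro j
      refine Fin.cases ?_ (fun j2 => ?_) j
      · simp only [Sum.elim_inr, Fin.cons_zero]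
        exact hTw0
      · simp only [Sum.elim_inr, Fin.cons_succ]
        have h1 : ((T' (v' (Sum.inr j2)) : F) : E) = T ((v' (Sum.inr j2) : E)) := rfl
        rw [← h1, hTr' j2, Submodule.coe_smul]

end Abstract

/-- The particle-hole symmetry matrix K = [[0, 1_N], [1_N, 0]]. -/
def Kmat (N : ℕ) : Matrix (Fin N ⊕ Fin N) (Fin N ⊕ Fin N) ℂ :=
  Matrix.fromBlocks 0 1 1 0

lemma Kmat_apply (N : ℕ) (i j : Fin N ⊕ Fin N) :
    Kmat N i j = if Sum.swap i = j then 1 else 0 := by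
  rcases i with i | i <;> rcases j with j | j <;>
    simp [Kmat, Matrix.one_apply, Sum.swap]

lemma Kmat_apply' (N : ℕ) (i j : Fin N ⊕ Fin N) :
    Kmat N i j = if i = Sum.swap j then 1 else 0 := by
  rcases i with i | i <;> rcases j with j | j <;>
    simp [Kmat, Matrix.one_apply, Sum.swap]

lemma Kmat_mul_apply {N : ℕ} (M : Matrix (Fin N ⊕ Fin N) (Fin N ⊕ Fin N) ℂ)
    (i j : Fin N ⊕ Fin N) : (Kmat N * M) i j = M (Sum.swap i) j := by
  rw [Matrix.mul_apply]
  simp [Kmat_apply, ite_mul]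

lemma mul_Kmat_apply {N : ℕ} (M : Matrix (Fin N ⊕ Fin N) (Fin N ⊕ Fin N) ℂ)
    (i j : Fin N ⊕ Fin N) : (M * Kmat N) i j = M i (Sum.swap j) := by
  rw [Matrix.mul_apply]
  simp [Kmat_apply', mul_ite]

lemma Kmat_transpose (N : ℕ) : (Kmat N)ᵀ = Kmat N := by
  ext i j
  rw [Matrix.transpose_apply, Kmat_apply, Kmat_apply']
  exact if_congr eq_comm rfl rfl

/-- a Hermitian BdG Hamiltonian (Kᵀ·H̄·K = -H) can be diagonalized by a
canonical transformation W (unitary with Kᵀ·W̄·K = W) as W·H·W* = [[D, 0], [0, -D]] with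
D a real diagonal matrix. -/
theorem bdg_diagonalization_by_canonical_transformation (N : ℕ) (hN : 1 ≤ N)
    (H : Matrix (Fin N ⊕ Fin N) (Fin N ⊕ Fin N) ℂ) (hH : H.IsHermitian)
    (hsym : (Kmat N)ᵀ * H.map star * Kmat N = -H) :
    ∃ (W : Matrix (Fin N ⊕ Fin N) (Fin N ⊕ Fin N) ℂ) (d : Fin N → ℝ),
      W ∈ Matrix.unitaryGroup (Fin N ⊕ Fin N) ℂ ∧
      (Kmat N)ᵀ * W.map star * Kmat N = W ∧
      W * H * Wᴴ =
        Matrix.fromBlocks (Matrix.diagonal fun i => (d i : ℂ)) 0 0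
          (-(Matrix.diagonal fun i => (d i : ℂ))) := by
  classical
  have hH2 : ∀ i j, (starRingEnd ℂ) (H (Sum.swap i) (Sum.swap j)) = -H i j := by
    intro i j
    have h1 : ((Kmat N)ᵀ * H.map star * Kmat N) i j = (-H) i j := by rw [hsym]
    rw [Kmat_transpose, mul_Kmat_apply, Kmat_mul_apply] at h1
    simpa [Matrix.map_apply, Matrix.neg_apply] using h1
  -- reindexing helper
  have hreidx : ∀ (f : Fin N ⊕ Fin N → ℂ), ∑ j, f j = ∑ j, f (Sum.swap j) :=
    fun f => (Fintype.sum_equiv (Equiv.sumComm (Fin N) (Fin N))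
      (fun j => f (Sum.swap j)) f (fun j => by simp)).symm
  set θ : EuclideanSpace ℂ (Fin N ⊕ Fin N) → EuclideanSpace ℂ (Fin N ⊕ Fin N) :=
    fun x => WithLp.toLp 2 (fun i => (starRingEnd ℂ) (x (Sum.swap i))) with hθdef
  have hadd : ∀ x y, θ (x + y) = θ x + θ y := by
    intro x y; ext i
    simp [hθdef, PiLp.add_apply]
  have hsmul : ∀ (c : ℂ) x, θ (c • x) = (starRingEnd ℂ) c • θ x := by
    intro c x; ext i
    simp [hθdef, PiLp.smul_apply, smul_eq_mul]
  have hinv : ∀ x, θ (θ x) = x := by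
    intro x; ext i
    show (starRingEnd ℂ) ((starRingEnd ℂ) (x (Sum.swap (Sum.swap i)))) = x i
    rw [Complex.conj_conj]
    exact congrArg x (Sum.swap_swap i)
  have hinner : ∀ x y : EuclideanSpace ℂ (Fin N ⊕ Fin N), ⟪θ x, θ y⟫ = ⟪y, x⟫ := by
    intro x y
    rw [PiLp.inner_apply, PiLp.inner_apply]
    simp only [hθdef, RCLike.inner_apply, starRingEnd_self_apply]
    rw [hreidx (fun i => x i * (starRingEnd ℂ) (y i))]
    refine Finset.sum_congr rfl fun i _ => ?_
    ring
  set T : EuclideanSpace ℂ (Fin N ⊕ Fin N) →ₗ[ℂ] EuclideanSpace ℂ (Fin N ⊕ Fin N) :=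
    Matrix.toEuclideanLin H with hTdef
  have hTapp : ∀ (x : EuclideanSpace ℂ (Fin N ⊕ Fin N)) i, T x i = ∑ j, H i j * x j :=
    fun x i => rfl
  have hTsymm : T.IsSymmetric := Matrix.isHermitian_iff_isSymmetric.mp hH
  have hanti : ∀ x, θ (T x) = -T (θ x) := by
    intro x
    ext i
    have h1 : θ (T x) i = ∑ j, (starRingEnd ℂ) (H (Sum.swap i) j) * (starRingEnd ℂ) (x j) := by
      simp [hθdef, hTapp, map_sum]
    have h4 : θ (T x) i = ∑ j, -(H i j * θ x j) := by
      rw [h1, hreidx (fun j => (starRingEnd ℂ) (H (Sum.swap i) j) * (starRingEnd ℂ) (x j))]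
      refine Finset.sum_congr rfl fun j _ => ?_
      rw [hH2 i j]
      simp [hθdef]
    rw [h4]
    have h5 : (-T (θ x)) i = -(T (θ x) i) := rfl
    rw [h5, hTapp]
    rw [Finset.sum_neg_distrib]
  have hr : 2 * N ≤ Module.finrank ℂ (EuclideanSpace ℂ (Fin N ⊕ Fin N)) := by
    rw [finrank_euclideanSpace]
    simp [Fintype.card_sum]
    omega
  obtain ⟨v, d, horth, hθv, hTl, hTr⟩ :=
    exists_adapted_family N _ θ hadd hsmul hinv hinner T hTsymm hanti hr
  have hswap : ∀ i, v (Sum.swap i) = θ (v i) := by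
    rintro (k | k)
    · exact (hθv k).symm
    · show v (Sum.inl k) = θ (v (Sum.inr k))
      rw [← hθv k, hinv]
  set U : Matrix (Fin N ⊕ Fin N) (Fin N ⊕ Fin N) ℂ := Matrix.of fun i j => v j i with hU
  have hUU : Uᴴ * U = 1 := by
    ext i j
    rw [Matrix.mul_apply, Matrix.one_apply]
    have h6 := orthonormal_iff_ite.mp horth i j
    rw [PiLp.inner_apply] at h6
    simp only [RCLike.inner_apply] at h6
    simpa [hU, Matrix.conjTranspose_apply, Matrix.of_apply, mul_comm] using h6
  have hDdiag : Matrix.fromBlocks (Matrix.diagonal fun i => (d i : ℂ)) 0 0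
      (-(Matrix.diagonal fun i => (d i : ℂ)))
      = Matrix.diagonal (Sum.elim (fun i => (d i : ℂ)) (fun i => -(d i : ℂ))) := by
    have h8 : (-(Matrix.diagonal fun i => (d i : ℂ)))
        = Matrix.diagonal (fun i => -((d i : ℂ))) := Matrix.diagonal_neg _
    rw [h8, Matrix.fromBlocks_diagonal]
  have hHU : H * U = U * Matrix.fromBlocks (Matrix.diagonal fun i => (d i : ℂ)) 0 0
      (-(Matrix.diagonal fun i => (d i : ℂ))) := by
    ext i j
    rw [hDdiag, Matrix.mul_diagonal]
    have hTv : T (v j) = (Sum.elim (fun t => ((d t : ℂ))) (fun t => -(d t : ℂ)) j) • v j := by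
      rcases j with k | k
      · simpa using hTl k
      · simpa using hTr k
    have h5 : (H * U) i j = T (v j) i := by
      rw [Matrix.mul_apply, hTapp]
      simp [hU, Matrix.of_apply]
    rw [h5, hTv]
    have h7 : ((Sum.elim (fun t => ((d t : ℂ))) (fun t => -(d t : ℂ)) j) • v j) i
        = (Sum.elim (fun t => ((d t : ℂ))) (fun t => -(d t : ℂ)) j) * v j i := rfl
    rw [h7]
    simp [hU, Matrix.of_apply]
    ring
  refine ⟨Uᴴ, d, ?_, ?_, ?_⟩
  · rw [Matrix.mem_unitaryGroup_iff, Matrix.star_eq_conjTranspose,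
      Matrix.conjTranspose_conjTranspose, hUU]
  · have hWstar : (Uᴴ).map star = Uᵀ := by
      ext i j
      simp [Matrix.map_apply, Matrix.conjTranspose_apply, Matrix.transpose_apply]
    rw [Kmat_transpose, hWstar]
    ext i j
    rw [mul_Kmat_apply, Kmat_mul_apply, Matrix.transpose_apply, Matrix.conjTranspose_apply]
    show v (Sum.swap i) (Sum.swap j) = star (v i j)
    rw [hswap i]
    show (starRingEnd ℂ) (v i (Sum.swap (Sum.swap j))) = star (v i j)
    rw [congrArg (v i) (Sum.swap_swap j)]
    rfl
  · rw [Matrix.conjTranspose_conjTranspose, Matrix.mul_assoc, hHU, ← Matrix.mul_assoc,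
      hUU, Matrix.one_mul]
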